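/- arXiv:2102.11887 — 2 statements merged into one kernel-verified Lean document; each statement's English description precedes it below -/
import Mathlib

section
/- For density matrices ρ and σ with supp(ρ) ⊆ supp(σ), the quantum cross entropy satisfies S(ρ,σ) = -tr(ρ log σ) ≥ -log tr(ρσ). -/
open Matrix BigOperators Finset
open scoped ComplexOrder

noncomputable def matLog {n : Type*} [Fintype n] [DecidableEq n] (A : Matrix n n ℂ) : Matrix n n ℂ :=
  if hA : A.IsHermitian then hA.cfc Real.log else 0

noncomputable def qCE {n : Type*} [Fintype n] [DecidableEq n] (ρ σ : Matrix n n ℂ) : ℝ :=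
  -(ρ * matLog σ).trace.re

def IsDensityMatrix {n : Type*} [Fintype n] [DecidableEq n] (ρ : Matrix n n ℂ) : Prop :=
  ρ.PosSemidef ∧ ρ.trace = 1

/-- The support of `ρ` is contained in the support of `σ`, phrased (for positive
semidefinite matrices, equivalently) as inclusion of kernels the other way. -/
def SuppSubseteq {n : Type*} [Fintype n] [DecidableEq n] (ρ σ : Matrix n n ℂ) : Prop :=
  ∀ v : n → ℂ, σ *ᵥ v = 0 → ρ *ᵥ v = 0

lemma jensen_log {ι : Type*} [Fintype ι] (q lam : ι → ℝ)
    (hq : ∀ j, 0 ≤ q j) (hsum : ∑ j, q j = 1) (hlam : ∀ j, 0 ≤ lam j)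
    (hz : ∀ j, lam j = 0 → q j = 0) :
    ∑ j, q j * Real.log (lam j) ≤ Real.log (∑ j, q j * lam j) := by
  classical
  set t := Finset.univ.filter (fun j => q j ≠ 0) with ht
  have hmem : ∀ j ∈ t, lam j ∈ Set.Ioi (0 : ℝ) := by
    intro j hj
    simp only [ht, Finset.mem_filter] at hj
    rcases (hlam j).lt_or_eq with h | h
    · exact h
    · exact absurd (hz j h.symm) hj.2
  have h1 : ∑ j ∈ t, q j = 1 := by
    rw [ht, Finset.sum_filter_ne_zero]; exact hsum
  have key := (strictConcaveOn_log_Ioi.concaveOn).le_map_sum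
    (t := t) (w := q) (p := lam) (fun j _ => hq j) h1 hmem
  simp only [smul_eq_mul] at key
  have e1 : ∑ j ∈ t, q j * Real.log (lam j) = ∑ j, q j * Real.log (lam j) := by
    rw [ht]
    refine Finset.sum_filter_of_ne fun j _ hne => ?_
    intro h0; apply hne; rw [h0, zero_mul]
  have e2 : ∑ j ∈ t, q j * lam j = ∑ j, q j * lam j := by
    rw [ht]
    refine Finset.sum_filter_of_ne fun j _ hne => ?_
    intro h0; apply hne; rw [h0, zero_mul]
  rw [e1, e2] at key
  exact key

lemma trace_mul_UDU {n : Type*} [Fintype n] [DecidableEq n]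
    (ρ U : Matrix n n ℂ) (d : n → ℂ) :
    (ρ * (U * diagonal d * star U)).trace = ∑ j, (star U * ρ * U) j j * d j := by
  have : (ρ * (U * diagonal d * star U)).trace = ((star U * ρ * U) * diagonal d).trace := by
    rw [show ρ * (U * diagonal d * star U) = (ρ * U * diagonal d) * star U by
          noncomm_ring]
    rw [Matrix.trace_mul_comm, ← Matrix.mul_assoc, ← Matrix.mul_assoc]
  rw [this, Matrix.trace]
  simp [Matrix.diag, Matrix.mul_diagonal]

theorem stmt10 {n : Type*} [Fintype n] [DecidableEq n] (ρ σ : Matrix n n ℂ)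
    (hρ : IsDensityMatrix ρ) (hσ : IsDensityMatrix σ) (hsupp : SuppSubseteq ρ σ) :
    qCE ρ σ ≥ -Real.log ((ρ * σ).trace.re) := by
  classical
  have hσH : σ.IsHermitian := hσ.1.1
  set U : Matrix n n ℂ := (Matrix.IsHermitian.eigenvectorUnitary hσH : Matrix n n ℂ) with hU
  set lam : n → ℝ := hσH.eigenvalues with hlamdef
  set M : Matrix n n ℂ := star U * ρ * U with hMdef
  have hUU : U * star U = 1 :=
    (Matrix.mem_unitaryGroup_iff).mp (Matrix.IsHermitian.eigenvectorUnitary hσH).2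
  have hMpsd : M.PosSemidef := by
    rw [hMdef, Matrix.star_eq_conjTranspose]
    exact hρ.1.conjTranspose_mul_mul_same U
  have hMnn : ∀ j, 0 ≤ M j j := by
    intro j
    exact hMpsd.diag_nonneg
  set q : n → ℝ := fun j => (M j j).re with hqdef
  have hqnn : ∀ j, 0 ≤ q j := fun j => (Complex.nonneg_iff.mp (hMnn j)).1
  have hMreal : ∀ j, M j j = (q j : ℂ) := by
    intro j
    have him := (Complex.nonneg_iff.mp (hMnn j)).2
    exact Complex.ext rfl him.symm
  -- entry formula for M j j
  have hMjj : ∀ j, M j j = star (⇑(hσH.eigenvectorBasis j)) ⬝ᵥ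
      (ρ *ᵥ ⇑(hσH.eigenvectorBasis j)) := by
    intro j
    have hcol : (fun k => U k j) = ⇑(hσH.eigenvectorBasis j) := by
      funext k
      exact Matrix.IsHermitian.eigenvectorUnitary_apply hσH k j
    rw [← hcol]
    simp only [hMdef, Matrix.mul_apply, Matrix.star_eq_conjTranspose,
      Matrix.conjTranspose_apply, dotProduct, mulVec, Finset.sum_mul, Finset.mul_sum,
      Pi.star_apply]
    rw [Finset.sum_comm]
    refine Finset.sum_congr rfl fun k _ => Finset.sum_congr rfl fun l _ => ?_
    simp [dotProduct]
    ring
  have hlamnn : ∀ j, 0 ≤ lam j := fun j => hσ.1.eigenvalues_nonneg j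
  have hzero : ∀ j, lam j = 0 → q j = 0 := by
    intro j h0
    have hv : σ *ᵥ ⇑(hσH.eigenvectorBasis j) = 0 := by
      rw [hσH.mulVec_eigenvectorBasis, ← hlamdef, h0]
      simp
    have hρv := hsupp _ hv
    have : M j j = 0 := by rw [hMjj j, hρv, dotProduct_zero]
    rw [hqdef]; simp [this]
  have hsumq : ∑ j, q j = 1 := by
    have htr : M.trace = 1 := by
      rw [hMdef, Matrix.trace_mul_cycle, hUU, Matrix.one_mul]
      exact hρ.2
    have : (M.trace).re = 1 := by rw [htr]; simp
    rw [← this, Matrix.trace, Complex.re_sum]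
    rfl
  -- trace of ρ * σ
  have htrρσ : (ρ * σ).trace = ∑ j, M j j * (lam j : ℂ) := by
    conv_lhs => rw [hσH.spectral_theorem]
    exact trace_mul_UDU ρ U (fun j => (lam j : ℂ))
  have htrρσ_re : (ρ * σ).trace.re = ∑ j, q j * lam j := by
    rw [htrρσ]
    rw [Complex.re_sum]
    refine Finset.sum_congr rfl fun j _ => ?_
    rw [hMreal j]
    simp [← Complex.ofReal_mul]
  -- trace of ρ * matLog σ
  have hlog : matLog σ = U * diagonal (fun j => (Real.log (lam j) : ℂ)) * star U := by
    rw [matLog, dif_pos hσH]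
    rfl
  have htrlog' : (ρ * matLog σ).trace = ∑ j, M j j * (Real.log (lam j) : ℂ) := by
    rw [hlog]
    exact trace_mul_UDU ρ U (fun j => (Real.log (lam j) : ℂ))
  have htrlog : (ρ * matLog σ).trace.re = ∑ j, q j * Real.log (lam j) := by
    rw [htrlog', Complex.re_sum]
    refine Finset.sum_congr rfl fun j _ => ?_
    rw [hMreal j]
    simp [← Complex.ofReal_mul]
  have key := jensen_log q lam hqnn hsumq hlamnn hzero
  rw [qCE, htrlog, ge_iff_le, htrρσ_re]
  exact neg_le_neg key
end

section
/- Let σ be a density matrix and Π an orthogonal projector with rank(ΠσΠ) = 1. Then [ΠσΠ, σ] = 0 if and only if [Π, σ] = 0. -/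
open Matrix
open scoped ComplexOrder

theorem stmt18 {n : Type*} [Fintype n] [DecidableEq n] (Pr σ : Matrix n n ℂ)
    (hPrherm : Pr.IsHermitian) (hPrproj : Pr * Pr = Pr)
    (hσ : σ.PosSemidef) (hσ1 : σ.trace = 1)
    (hrank : (Pr * σ * Pr).rank = 1) :
    (Pr * σ * Pr) * σ = σ * (Pr * σ * Pr) ↔ Pr * σ = σ * Pr := by
  constructor
  · intro hcomm
    obtain ⟨s, hss, hsH⟩ : ∃ s : Matrix n n ℂ, s * s = σ ∧ sᴴ = s := by
      open scoped MatrixOrder in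
      exact ⟨CFC.sqrt σ, CFC.sqrt_mul_sqrt_self σ hσ.nonneg,
        (CFC.sqrt_nonneg σ).posSemidef.isHermitian⟩
    have hσH : σᴴ = σ := hσ.isHermitian
    -- h0 : Pr σ Pr σ (1 - Pr) = 0
    have h0 : Pr * σ * Pr * σ * (1 - Pr) = 0 := by
      have := congrArg (fun X => Pr * X * (1 - Pr)) hcomm
      simp only [mul_sub, sub_mul, mul_one, one_mul] at this ⊢
      calc Pr * σ * Pr * σ - Pr * σ * Pr * σ * Pr
          = Pr * (Pr * σ * Pr * σ) - Pr * (Pr * σ * Pr * σ) * Pr := by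
            rw [show Pr * (Pr * σ * Pr * σ) = Pr * Pr * σ * Pr * σ by noncomm_ring,
              hPrproj]
        _ = Pr * (σ * (Pr * σ * Pr)) - Pr * (σ * (Pr * σ * Pr)) * Pr := by rw [hcomm]
        _ = 0 := by
            rw [show Pr * (σ * (Pr * σ * Pr)) * Pr = Pr * σ * Pr * σ * (Pr * Pr) by noncomm_ring,
              hPrproj]
            noncomm_ring
    -- rewrite in terms of M = Pr * s, N = s * (1 - Pr)
    set M := Pr * s with hM
    set N := s * (1 - Pr) with hN
    have hMH : Mᴴ = s * Pr := by rw [hM, conjTranspose_mul, hsH, hPrherm.eq]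
    have h1 : (Mᴴ * M) * (Mᴴ * M) * N = 0 := by
      rw [hMH, hM, hN]
      calc s * Pr * (Pr * s) * (s * Pr * (Pr * s)) * (s * (1 - Pr))
          = s * ((Pr * Pr) * (s * s) * (Pr * Pr) * (s * s) * (1 - Pr)) := by noncomm_ring
        _ = s * (Pr * σ * Pr * σ * (1 - Pr)) := by rw [hPrproj, hss]
        _ = 0 := by rw [h0, mul_zero]
    have h2 : (Mᴴ * M) * N = 0 := by
      have hHerm : (Mᴴ * M)ᴴ = Mᴴ * M := by
        rw [conjTranspose_mul, conjTranspose_conjTranspose]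
      have : ((Mᴴ * M) * N)ᴴ * ((Mᴴ * M) * N) = 0 := by
        rw [conjTranspose_mul, hHerm]
        calc Nᴴ * (Mᴴ * M) * ((Mᴴ * M) * N)
            = Nᴴ * ((Mᴴ * M) * (Mᴴ * M) * N) := by noncomm_ring
          _ = 0 := by rw [h1, mul_zero]
      exact conjTranspose_mul_self_eq_zero.mp this
    have h3 : M * N = 0 := by
      have : (M * N)ᴴ * (M * N) = 0 := by
        rw [conjTranspose_mul]
        calc Nᴴ * Mᴴ * (M * N) = Nᴴ * ((Mᴴ * M) * N) := by noncomm_ring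
          _ = 0 := by rw [h2, mul_zero]
      exact conjTranspose_mul_self_eq_zero.mp this
    have h4 : Pr * σ * (1 - Pr) = 0 := by
      have : Pr * σ * (1 - Pr) = M * N := by rw [hM, hN, ← hss]; noncomm_ring
      rw [this, h3]
    have h5 : Pr * σ = Pr * σ * Pr := by
      have h := h4
      simp only [mul_sub, mul_one] at h
      exact sub_eq_zero.mp h
    have h6 : σ * Pr = Pr * σ * Pr := by
      have : (Pr * σ)ᴴ = (Pr * σ * Pr)ᴴ := congrArg _ h5
      simpa [conjTranspose_mul, hσH, hPrherm.eq, mul_assoc] using this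
    rw [h5, h6]
  · intro hc
    have h1 : Pr * σ * Pr = Pr * σ := by
      rw [mul_assoc, ← hc, ← mul_assoc, hPrproj]
    rw [h1]
    nth_rewrite 1 [hc]
    rw [mul_assoc]
end
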